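/- Let u and v be Lyndon words over a well-ordered alphabet. Then the Shirshov factorization of uv is (u, v) if and only if either u is a single letter, or u has length ≥ 2 and u_R ≤_lex v, where (u_L, u_R) is the Shirshov factorization of u. -/

import Mathlib

variable {X : Type*} [LinearOrder X] [WellFoundedLT X]

/-- The partial order `≺` on words: `u ≺ v` iff `u = r ++ x :: s`, `v = r ++ y :: t`
with letters `x < y`. -/
def Prec (u v : List X) : Prop :=
  ∃ (r s t : List X) (x y : X), x < y ∧ u = r ++ x :: s ∧ v = r ++ y :: t

/-- The pseudo-lexicographic order: `u <_lex v` iff `v` is a proper prefix of `u` or `u ≺ v`. -/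
def PLex (u v : List X) : Prop :=
  (v <+: u ∧ v ≠ u) ∨ Prec u v

/-- `u ≤_lex v`. -/
def PLexLe (u v : List X) : Prop := u = v ∨ PLex u v

/-- A Lyndon word (Kharchenko convention): a nonempty word strictly greater in the
pseudo-lexicographic order than each of its proper nonempty suffixes. -/
def IsLyndon (u : List X) : Prop :=
  u ≠ [] ∧ ∀ v w : List X, u = v ++ w → v ≠ [] → w ≠ [] → PLex w u


/-- The Shirshov factorization of `u`: `u = uL ++ uR` where `uR` is the
pseudo-lexicographically largest proper (nonempty) suffix of `u`. -/
def IsShirshov (u uL uR : List X) : Prop :=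
  u = uL ++ uR ∧ uL ≠ [] ∧ uR ≠ [] ∧
    ∀ w : List X, w <:+ u → w ≠ u → w ≠ [] → w = uR ∨ PLex w uR

namespace ShirshovAux

lemma plex_cons {x : X} {s t : List X} (h : PLex s t) : PLex (x :: s) (x :: t) := by
  rcases h with ⟨hp, hne⟩ | ⟨r, s', t', a, b, hab, hs, ht⟩
  · obtain ⟨q, hq⟩ := hp
    exact Or.inl ⟨⟨q, by simp [hq]⟩, by simpa using hne⟩
  · exact Or.inr ⟨x :: r, s', t', a, b, hab, by simp [hs], by simp [ht]⟩

lemma plex_iff (u v : List X) : PLex u v ↔ List.Lex (fun a b : X => b < a) v u := by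
  induction u generalizing v with
  | nil =>
    constructor
    · rintro (⟨⟨p, hp⟩, hne⟩ | ⟨r, s, t, x, y, _, hs, _⟩)
      · exact absurd (List.append_eq_nil_iff.mp hp).1 hne
      · exact absurd hs (by simp)
    · intro h; exact absurd h List.not_lex_nil
  | cons x s ih =>
    cases v with
    | nil =>
      constructor
      · intro _; exact List.Lex.nil
      · intro _; exact Or.inl ⟨List.nil_prefix, by simp⟩
    | cons y t =>
      constructor
      · rintro (⟨⟨p, hp⟩, hne⟩ | ⟨r, s', t', a, b, hab, hs, ht⟩)
        · rw [List.cons_append] at hp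
          obtain ⟨rfl, h2⟩ := List.cons.inj hp
          have htns : t ≠ s := by
            rintro rfl
            exact hne rfl
          exact List.Lex.cons ((ih t).mp (Or.inl ⟨⟨p, h2⟩, htns⟩))
        · cases r with
          | nil =>
            simp only [List.nil_append] at hs ht
            obtain ⟨rfl, rfl⟩ := List.cons.inj hs
            obtain ⟨rfl, rfl⟩ := List.cons.inj ht
            exact List.Lex.rel hab
          | cons c r' =>
            rw [List.cons_append] at hs ht
            obtain ⟨rfl, h2⟩ := List.cons.inj hs
            obtain ⟨h3, h4⟩ := List.cons.inj ht
            subst h3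
            exact List.Lex.cons ((ih t).mp (Or.inr ⟨r', s', t', a, b, hab, h2, h4⟩))
      · intro h
        cases h with
        | cons hlt => exact plex_cons ((ih t).mpr hlt)
        | rel hr => exact Or.inr ⟨[], s, t, x, y, hr, rfl, rfl⟩

instance : IsTrichotomous X (fun a b : X => b < a) :=
  ⟨fun a b h1 h2 => by
    rcases lt_trichotomy b a with h | h | h
    · exact absurd h h1
    · exact h.symm
    · exact absurd h h2⟩

instance : IsTrans X (fun a b : X => b < a) := ⟨fun _ _ _ h1 h2 => lt_trans h2 h1⟩

instance : IsIrrefl X (fun a b : X => b < a) := ⟨fun a => lt_irrefl a⟩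

instance : IsAsymm X (fun a b : X => b < a) := ⟨fun _ _ h1 h2 => absurd h1 (asymm h2)⟩

instance : IsStrictOrder X (fun a b : X => b < a) := {}

instance : IsStrictTotalOrder X (fun a b : X => b < a) := {}

lemma plex_trans {u v w : List X} (h1 : PLex u v) (h2 : PLex v w) : PLex u w := by
  rw [plex_iff] at *
  exact List.lex_trans (fun h1 h2 => lt_trans h2 h1) h2 h1

lemma plex_asymm {u v : List X} (h1 : PLex u v) (h2 : PLex v u) : False := by
  rw [plex_iff] at *
  exact asymm_of (List.Lex fun a b : X => b < a) h1 h2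

lemma plex_trichotomy (u v : List X) : u = v ∨ PLex u v ∨ PLex v u := by
  rcases trichotomous_of (List.Lex fun a b : X => b < a) v u with h | h | h
  · exact Or.inr (Or.inl ((plex_iff u v).mpr h))
  · exact Or.inl h.symm
  · exact Or.inr (Or.inr ((plex_iff v u).mpr h))

lemma plexle_trans {u v w : List X} (h1 : PLexLe u v) (h2 : PLexLe v w) : PLexLe u w := by
  rcases h1 with rfl | h1
  · exact h2
  · rcases h2 with rfl | h2
    · exact Or.inr h1
    · exact Or.inr (plex_trans h1 h2)

lemma plex_cons_cancel {x : X} {s t : List X} (h : PLex (x :: s) (x :: t)) : PLex s t := by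
  rw [plex_iff] at *
  cases h with
  | cons hlt => exact hlt
  | rel hr => exact absurd hr (lt_irrefl x)

lemma plex_append_cancel (p : List X) {s t : List X} (h : PLex (p ++ s) (p ++ t)) :
    PLex s t := by
  induction p with
  | nil => simpa using h
  | cons a p' ih => exact ih (plex_cons_cancel (by simpa using h))

lemma plex_append_left {s v : List X} (hs : s ≠ []) (h : PLexLe s v) : PLex (s ++ v) v := by
  rcases h with rfl | (⟨⟨p, hp⟩, hne⟩ | ⟨r, s', t', a, b, hab, h1, h2⟩)
  · exact Or.inl ⟨⟨s, rfl⟩, fun he => hs (List.self_eq_append_left.mp he)⟩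
  · refine Or.inl ⟨⟨p ++ v, by rw [← List.append_assoc, hp]⟩, ?_⟩
    exact fun he => hs (List.self_eq_append_left.mp he)
  · exact Or.inr ⟨r, s' ++ v, t', a, b, hab, by simp [h1], h2⟩

lemma plexle_of_plex_append {s v : List X} (hv : IsLyndon v) (hs : s ≠ [])
    (h : PLex (s ++ v) v) : PLexLe s v := by
  rcases plex_trichotomy s v with rfl | h1 | h1
  · exact Or.inl rfl
  · exact Or.inr h1
  · exfalso
    rcases h1 with ⟨⟨p, hp⟩, hne⟩ | ⟨r, s', t', a, b, hab, h1, h2⟩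
    · have hpne : p ≠ [] := by rintro rfl; exact hne (by simpa using hp)
      subst hp
      have h3 : PLex (s ++ p) p := plex_append_cancel s h
      have h4 : PLex p (s ++ p) := hv.2 s p rfl hs hpne
      exact plex_asymm h3 h4
    · have hPrec : Prec v (s ++ v) := ⟨r, s', t' ++ v, a, b, hab, h1, by simp [h2]⟩
      exact plex_asymm h (Or.inr hPrec)

lemma suffix_cons_cases {w : List X} {x : X} {t : List X} (h : w <:+ x :: t) :
    w = x :: t ∨ w <:+ t := by
  obtain ⟨p, hp⟩ := h
  cases p with
  | nil => exact Or.inl (by simpa using hp)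
  | cons c p' =>
    rw [List.cons_append] at hp
    exact Or.inr ⟨p', (List.cons.inj hp).2⟩

lemma exists_max_suffix (t : List X) (ht : t ≠ []) :
    ∃ m, m <:+ t ∧ m ≠ [] ∧ ∀ w, w <:+ t → w ≠ [] → w = m ∨ PLex w m := by
  induction t with
  | nil => exact absurd rfl ht
  | cons x t' ih =>
    by_cases ht' : t' = []
    · subst ht'
      refine ⟨[x], List.suffix_refl _, by simp, ?_⟩
      intro w hw hwne
      rcases suffix_cons_cases hw with rfl | hw'
      · exact Or.inl rfl
      · exact absurd (List.suffix_nil.mp hw') hwne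
    · obtain ⟨m, hm1, hm2, hm3⟩ := ih ht'
      rcases plex_trichotomy (x :: t') m with he | h | h
      · exfalso
        have hl := hm1.length_le
        rw [← he] at hl
        simp at hl
      · refine ⟨m, hm1.trans (List.suffix_cons x t'), hm2, ?_⟩
        intro w hw hwne
        rcases suffix_cons_cases hw with rfl | hw'
        · exact Or.inr h
        · exact hm3 w hw' hwne
      · refine ⟨x :: t', List.suffix_refl _, by simp, ?_⟩
        intro w hw hwne
        rcases suffix_cons_cases hw with rfl | hw'
        · exact Or.inl rfl
        · right
          rcases hm3 w hw' hwne with rfl | h2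
          · exact h
          · exact plex_trans h2 h

lemma exists_shirshov {u : List X} (h2 : 2 ≤ u.length) : ∃ uL uR, IsShirshov u uL uR := by
  cases u with
  | nil => simp at h2
  | cons x t =>
    have ht : t ≠ [] := by rintro rfl; simp at h2
    obtain ⟨m, hm1, hm2, hm3⟩ := exists_max_suffix t ht
    obtain ⟨p, hp⟩ := hm1
    refine ⟨x :: p, m, by simp [hp], by simp, hm2, ?_⟩
    intro w hw hwne hwnil
    rcases suffix_cons_cases hw with rfl | hw'
    · exact absurd rfl hwne
    · exact hm3 w hw' hwnil

lemma suffix_append_cases {w u v : List X} (h : w <:+ u ++ v) :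
    w <:+ v ∨ ∃ s, s <:+ u ∧ s ≠ [] ∧ w = s ++ v := by
  obtain ⟨p, hp⟩ := h
  by_cases hl : u.length ≤ p.length
  · left
    have hu : u <+: p :=
      List.prefix_of_prefix_length_le ⟨v, rfl⟩ ⟨w, hp⟩ hl
    obtain ⟨q, hq⟩ := hu
    have hqv : u ++ (q ++ w) = u ++ v := by rw [← List.append_assoc, hq, hp]
    exact ⟨q, List.append_cancel_left hqv⟩
  · right
    push_neg at hl
    have hpu : p <+: u :=
      List.prefix_of_prefix_length_le ⟨w, hp⟩ ⟨v, rfl⟩ (le_of_lt hl)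
    obtain ⟨s, hs⟩ := hpu
    have hsne : s ≠ [] := by
      rintro rfl
      rw [List.append_nil] at hs
      rw [hs] at hl
      exact lt_irrefl _ hl
    refine ⟨s, ⟨p, hs⟩, hsne, ?_⟩
    rw [← hs, List.append_assoc] at hp
    exact List.append_cancel_left hp

end ShirshovAux

open ShirshovAux in
/-- For Lyndon words `u, v`, the Shirshov factorization of `uv`
is `(u, v)` iff either `u` is a single letter, or `u` has length `≥ 2` and
`u_R ≤_lex v` for the Shirshov factorization `(u_L, u_R)` of `u`. -/
theorem isShirshov_append_iff (u v : List X) (hu : IsLyndon u) (hv : IsLyndon v) :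
    IsShirshov (u ++ v) u v ↔
      u.length = 1 ∨
      (2 ≤ u.length ∧ ∀ uL uR : List X, IsShirshov u uL uR → PLexLe uR v) := by
  constructor
  · intro h
    rcases Nat.lt_or_ge u.length 2 with hlen | hlen
    · left
      have h0 : 0 < u.length := List.length_pos_iff.mpr hu.1
      omega
    · right
      refine ⟨hlen, ?_⟩
      rintro uL uR ⟨hsplit, hLne, hRne, -⟩
      have hsuf : uR ++ v <:+ u ++ v := by
        refine ⟨uL, ?_⟩
        rw [← List.append_assoc, ← hsplit]
      have hne : uR ++ v ≠ u ++ v := by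
        intro he
        have h1 : uR = u := List.append_cancel_right he
        rw [hsplit] at h1
        exact hLne (List.self_eq_append_left.mp h1)
      have hne2 : uR ++ v ≠ [] := by simp [hRne]
      rcases h.2.2.2 _ hsuf hne hne2 with he | hlex
      · exact absurd (List.append_left_eq_self.mp he) hRne
      · exact plexle_of_plex_append hv hRne hlex
  · intro h
    refine ⟨rfl, hu.1, hv.1, ?_⟩
    intro w hw hwne hwnil
    rcases suffix_append_cases hw with hwv | ⟨s, hsu, hsne, rfl⟩
    · rcases eq_or_ne w v with rfl | hne
      · exact Or.inl rfl
      · obtain ⟨p, hp⟩ := hwv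
        have hpne : p ≠ [] := by
          rintro rfl
          exact hne (by simpa using hp)
        exact Or.inr (hv.2 p w hp.symm hpne hwnil)
    · have hsne2 : s ≠ u := by rintro rfl; exact hwne rfl
      right
      apply plex_append_left hsne
      rcases h with h1 | ⟨h2, hmax⟩
      · exfalso
        obtain ⟨p, hp⟩ := hsu
        have hlen := congrArg List.length hp
        rw [List.length_append, h1] at hlen
        have hsl : 0 < s.length := List.length_pos_iff.mpr hsne
        have hpl : p = [] := List.length_eq_zero_iff.mp (by omega)
        rw [hpl] at hp
        exact hsne2 (by simpa using hp)
      · obtain ⟨uL, uR, hsh⟩ := exists_shirshov h2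
        have hRv : PLexLe uR v := hmax uL uR hsh
        have hsR : PLexLe s uR := by
          rcases hsh.2.2.2 s hsu hsne2 hsne with rfl | hh
          · exact Or.inl rfl
          · exact Or.inr hh
        exact plexle_trans hsR hRv
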